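/- arXiv:2512.10100 — 2 statements merged into one kernel-verified Lean document; each statement's English description precedes it below -/
import Mathlib

section
/- For every computable function f : ℕ → ℕ there exists a code c : Nat.Partrec.Code such that c.eval 0 = Part.some (f (Nat.Partrec.Code.encodeCode c)); consequently K (f (Nat.Partrec.Code.encodeCode c)) ≤ Nat.Partrec.Code.encodeCode c. -/
noncomputable def K (x : ℕ) : ℕ :=
  sInf {m : ℕ | ∃ c : Nat.Partrec.Code, Nat.Partrec.Code.encodeCode c = m ∧ c.eval 0 = Part.some x}

theorem self_referential_code (f : ℕ → ℕ) (hf : Computable f) :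
    ∃ c : Nat.Partrec.Code,
      c.eval 0 = Part.some (f (Nat.Partrec.Code.encodeCode c)) ∧
      K (f (Nat.Partrec.Code.encodeCode c)) ≤ Nat.Partrec.Code.encodeCode c := by
  obtain ⟨c, hc⟩ := Nat.Partrec.Code.fixed_point₂
    (f := fun c _ => Part.some (f (Nat.Partrec.Code.encodeCode c)))
    ((hf.comp (Computable.encode.comp Computable.fst)).partrec)
  have heval : c.eval 0 = Part.some (f (Nat.Partrec.Code.encodeCode c)) := by
    rw [hc]
  exact ⟨c, heval, Nat.sInf_le ⟨c, rfl, heval⟩⟩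
end

section
/- (Theorem 1, ideal AI systems.) Let Γ : Set ℕ be an infinite set, and let C : ℕ → ℕ → ℕ → Bool be a computable checker that is sound for Γ, i.e., for all x n p, C x n p = true implies x ∈ Γ ∧ K x > n. Then there exist x ∈ Γ and n : ℕ such that the statement 'every algorithm that outputs x has length > n' is true (K x > n), yet for every proof p : ℕ, C x n p = false. -/
open Nat.Partrec (Code)
open Nat.Partrec.Code

lemma K_mem (x : ℕ) :
    K x ∈ {m : ℕ | ∃ c : Code, encodeCode c = m ∧ c.eval 0 = Part.some x} := by
  apply Nat.sInf_mem
  exact ⟨encodeCode (Code.const x), Code.const x, rfl, eval_const x 0⟩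

lemma K_injective : Function.Injective K := by
  intro x y h
  obtain ⟨c, hc, hcx⟩ := K_mem x
  obtain ⟨d, hd, hdy⟩ := K_mem y
  have : c = d := by
    have : Encodable.encode c = Encodable.encode d := by
      rw [encodeCode_eq]; simp [hc, hd, h]
    exact Encodable.encode_injective this
  subst this
  exact Part.some_injective (hcx.symm.trans hdy)

lemma K_le {x : ℕ} {c : Code} (h : c.eval 0 = Part.some x) : K x ≤ encodeCode c :=
  Nat.sInf_le ⟨c, rfl, h⟩

def searchPred (C : ℕ → ℕ → ℕ → Bool) (n : ℕ) : ℕ → Bool :=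
  fun k => C k.unpair.1 n k.unpair.2

def searchFn (C : ℕ → ℕ → ℕ → Bool) : ℕ →. ℕ :=
  fun n => (Nat.rfind ((searchPred C n : ℕ → Bool) : ℕ →. Bool)).map (fun k => k.unpair.1)

lemma searchPred_computable {C : ℕ → ℕ → ℕ → Bool}
    (hC : Computable (fun q : ℕ × ℕ × ℕ => C q.1 q.2.1 q.2.2)) :
    Computable₂ (searchPred C) := by
  have hg2 : Computable (fun q : ℕ × ℕ => ((q.2.unpair.1, q.1, q.2.unpair.2) : ℕ × ℕ × ℕ)) :=
    ((Computable.fst.comp Computable.unpair).comp Computable.snd).pair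
      (Computable.fst.pair
        ((Computable.snd.comp Computable.unpair).comp Computable.snd))
  have h := hC.comp hg2
  exact h

lemma searchFn_partrec {C : ℕ → ℕ → ℕ → Bool}
    (hC : Computable (fun q : ℕ × ℕ × ℕ => C q.1 q.2.1 q.2.2)) :
    Partrec (searchFn C) := by
  apply Partrec.map
  · exact Partrec.rfind (searchPred_computable hC).partrec₂
  · exact (Computable.fst.comp Computable.unpair).comp₂ Computable.snd

theorem ideal_ai_incompleteness (Γ : Set ℕ) (hΓ : Γ.Infinite)
    (C : ℕ → ℕ → ℕ → Bool)
    (hC : Computable (fun q : ℕ × ℕ × ℕ => C q.1 q.2.1 q.2.2))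
    (hsound : ∀ x n p : ℕ, C x n p = true → x ∈ Γ ∧ K x > n) :
    ∃ x ∈ Γ, ∃ n : ℕ, K x > n ∧ ∀ p : ℕ, C x n p = false := by
  by_contra hcon
  push_neg at hcon
  have hex : ∀ n : ℕ, ∃ k : ℕ, searchPred C n k = true := by
    intro n
    have hfin : {x : ℕ | K x ≤ n}.Finite := by
      have hsub : {x : ℕ | K x ≤ n} ⊆ K ⁻¹' Set.Iic n := fun x hx => hx
      exact ((Set.finite_Iic n).preimage K_injective.injOn).subset hsub
    obtain ⟨x, hx⟩ := (hΓ.diff hfin).nonempty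
    have hKx : K x > n := lt_of_not_ge hx.2
    obtain ⟨p, hp⟩ := hcon x hx.1 n hKx
    exact ⟨Nat.pair x p, by simpa [searchPred] using hp⟩
  have hf : Partrec₂ (fun (c : Code) (_ : ℕ) => searchFn C (encodeCode c)) := by
    have h : Partrec fun q : Code × ℕ => searchFn C (Encodable.encode q.1) :=
      (searchFn_partrec hC).comp (Computable.encode.comp (Computable.fst (α := Code) (β := ℕ)))
    simpa [Partrec₂, encodeCode_eq] using h
  obtain ⟨c, hc⟩ := fixed_point₂ hf
  obtain ⟨k, hk⟩ := hex (encodeCode c)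
  have hdom : (Nat.rfind ((searchPred C (encodeCode c) : ℕ → Bool) : ℕ →. Bool)).Dom := by
    rw [Nat.rfind_dom']
    refine ⟨k, by simp [hk], @fun m _ => ?_⟩
    simp [PFun.coe_val]
  set k0 := (Nat.rfind ((searchPred C (encodeCode c) : ℕ → Bool) : ℕ →. Bool)).get hdom with hk0
  have hmem : k0 ∈ Nat.rfind ((searchPred C (encodeCode c) : ℕ → Bool) : ℕ →. Bool) :=
    Part.get_mem hdom
  have htrue : C k0.unpair.1 (encodeCode c) k0.unpair.2 = true := by
    have := Nat.rfind_spec hmem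
    simpa [searchPred] using this
  have heval : c.eval 0 = Part.some k0.unpair.1 := by
    have h1 : c.eval 0 = searchFn C (encodeCode c) := by rw [hc]
    rw [h1, searchFn, ← Part.some_get hdom, Part.map_some]
  have hle : K k0.unpair.1 ≤ encodeCode c := K_le heval
  have hgt : K k0.unpair.1 > encodeCode c := (hsound _ _ _ htrue).2
  omega
end
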